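/- Let G be a finite simple digraph with independence number at most α ≥ 1, let x be a vertex of G, and let C be a shortest directed cycle containing x. Then either C has length at most 2α + 1, or there exists an induced directed cycle C′ of G of length at most 2α whose vertex set is contained in V(C) \ {x}. -/

import Mathlib

variable {V : Type*}

def IsDicycle (A : V → V → Prop) : List V → Prop
  | [] => False
  | v :: l => (v :: l).Nodup ∧ List.Chain A v (l ++ [v])

def IsTournament (A : V → V → Prop) : Prop :=
  (∀ v, ¬ A v v) ∧ ∀ u v : V, u ≠ v → (A u v ↔ ¬ A v u)

def IndepNumLE (A : V → V → Prop) (α : ℕ) : Prop :=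
  ∀ I : Finset V, (∀ u ∈ I, ∀ v ∈ I, u ≠ v → ¬ A u v) → I.card ≤ α

noncomputable def outDeg (A : V → V → Prop) (v : V) : ℕ := {u | A v u}.ncard

noncomputable def inDeg (A : V → V → Prop) (v : V) : ℕ := {u | A u v}.ncard

def restrictRel (A : V → V → Prop) (S : Set V) : V → V → Prop :=
  fun u v => u ∈ S ∧ v ∈ S ∧ A u v

def cycleArcs : List V → List (V × V)
  | [] => []
  | v :: l => List.zip (v :: l) (l ++ [v])

def IsInducedDicycle (A : V → V → Prop) (l : List V) : Prop :=
  IsDicycle A l ∧ ∀ u ∈ l, ∀ v ∈ l, A u v → (u, v) ∈ cycleArcs l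

def IsFVS (A : V → V → Prop) (F : Set V) : Prop :=
  ∀ l, IsDicycle A l → ∃ v ∈ l, v ∈ F

def reachSet (A : V → V → Prop) (x : V) : Set V :=
  {y | y ≠ x ∧ Relation.TransGen A x y}

def HitsCyclesThrough (A : V → V → Prop) (S F : Set V) : Prop :=
  ∀ l, IsDicycle A l → (∃ v ∈ l, v ∈ S) → ∃ v ∈ l, v ∈ F

section helpers
variable {A : V → V → Prop}

lemma cycleArcs_mem (l : List V) (i : ℕ) (hi : i < l.length)
    (hj : (i + 1) % l.length < l.length) :
    (l.get ⟨i, hi⟩, l.get ⟨(i + 1) % l.length, hj⟩) ∈ cycleArcs l := by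
  match l with
  | [] => simp at hi
  | v :: t =>
    show _ ∈ List.zip (v :: t) (t ++ [v])
    have hi2 : i < (t ++ [v]).length := by simp at hi ⊢; omega
    have hi' : i < ((v :: t).zip (t ++ [v])).length := by
      rw [List.length_zip]; simp at hi ⊢; omega
    have hsecond : (t ++ [v])[i]'hi2
        = (v :: t).get ⟨(i + 1) % (v :: t).length, hj⟩ := by
      rcases Nat.lt_or_ge (i+1) (v :: t).length with h1 | h1
      · have hit : i < t.length := by simp at h1 ⊢; omega
        rw [List.getElem_append_left hit]
        have h3 : (i + 1) % (v :: t).length = i + 1 := Nat.mod_eq_of_lt h1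
        have h4 : (⟨(i + 1) % (v :: t).length, hj⟩ : Fin (v :: t).length)
            = ⟨i + 1, h1⟩ := Fin.ext h3
        rw [h4]
        simp
      · have hieq : i = t.length := by simp at hi h1 ⊢; omega
        rw [List.getElem_concat_length hieq]
        have h2 : i + 1 = (v :: t).length := by simp [hieq]
        have h3 : (i + 1) % (v :: t).length = 0 := by simp [h2]
        have h4 : (⟨(i + 1) % (v :: t).length, hj⟩ : Fin (v :: t).length)
            = ⟨0, by simp⟩ := Fin.ext h3
        rw [h4]
        simp
    have hmem2 : ((v :: t).zip (t ++ [v]))[i]'hi' ∈ (v :: t).zip (t ++ [v]) :=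
      List.getElem_mem hi'
    rw [@List.getElem_zip _ _ (v::t) (t++[v]) i hi'] at hmem2
    rw [← hsecond]
    exact hmem2

lemma get_map_range' (f : ℕ → V) (j m i : ℕ) (hi : i < ((List.range' j m).map f).length) :
    ((List.range' j m).map f).get ⟨i, hi⟩ = f (j + i) := by
  simp only [List.get_eq_getElem, List.getElem_map, List.getElem_range', Nat.one_mul]

lemma dicycle_nodup (l : List V) (h : IsDicycle A l) : l.Nodup := by
  match l with
  | [] => exact h.elim
  | v :: t => exact h.1

lemma chain_to_end (f : ℕ → V) (harc : ∀ t, A (f t) (f (t + 1))) :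
    ∀ m j c, A (f (j + m)) c →
      List.Chain A (f j) ((List.range' (j + 1) m).map f ++ [c]) := by
  intro m
  induction m with
  | zero => intro j c h; simpa [List.Chain] using h
  | succ m ih =>
    intro j c h
    rw [List.range'_succ]
    simp only [List.map_cons, List.cons_append]
    exact List.Chain.cons (harc j) (ih (j + 1) c (by rw [show j + 1 + m = j + (m + 1) by omega]; exact h))

lemma nodup_seg (f : ℕ → V) (n j m : ℕ) (hmn : m ≤ n)
    (hinj : ∀ s t, f s = f t → s % n = t % n) :
    ((List.range' j m).map f).Nodup := by
  refine List.Nodup.map_on ?_ (List.nodup_range' (s := j) (n := m))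
  intro s hs t ht hst
  rw [List.mem_range'] at hs ht
  obtain ⟨i, hi, rfl⟩ := hs
  obtain ⟨i', hi', rfl⟩ := ht
  have h := hinj _ _ hst
  rcases Nat.le_total (j + 1 * i) (j + 1 * i') with hle | hle
  · have : n ∣ (j + 1 * i') - (j + 1 * i) := (Nat.modEq_iff_dvd' hle).mp h
    have := Nat.eq_zero_of_dvd_of_lt this
    omega
  · have : n ∣ (j + 1 * i) - (j + 1 * i') := (Nat.modEq_iff_dvd' hle).mp h.symm
    have := Nat.eq_zero_of_dvd_of_lt this
    omega

lemma isDicycle_seg (f : ℕ → V) (j m : ℕ) (hm : 1 ≤ m)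
    (harc : ∀ t, A (f t) (f (t + 1)))
    (hclose : A (f (j + m - 1)) (f j))
    (hnd : ((List.range' j m).map f).Nodup) :
    IsDicycle A ((List.range' j m).map f) := by
  obtain ⟨m', rfl⟩ : ∃ m', m = m' + 1 := ⟨m - 1, by omega⟩
  rw [List.range'_succ]
  simp only [List.map_cons]
  refine ⟨?_, ?_⟩
  · rw [← List.map_cons, ← List.range'_succ]; exact hnd
  · exact chain_to_end f harc m' j (f j) (by simpa using hclose)

lemma dicycle_arcs (l : List V) (h : IsDicycle A l) (i : ℕ) (hi : i < l.length)
    (hj : (i + 1) % l.length < l.length) :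
    A (l.get ⟨i, hi⟩) (l.get ⟨(i + 1) % l.length, hj⟩) := by
  match l with
  | [] => simp at hi
  | v :: t =>
    have hch : List.Chain' A ((v :: t) ++ [v]) := h.2
    rw [List.Chain', List.isChain_iff_getElem] at hch
    have := hch i (by simp at hi ⊢; omega)
    have e1 : ((v :: t) ++ [v]).get ⟨i, by simp at hi ⊢; omega⟩ = (v :: t).get ⟨i, hi⟩ := by
      simp only [List.get_eq_getElem]
      exact List.getElem_append_left hi
    have e2 : ((v :: t) ++ [v]).get ⟨i + 1, by simp at hi ⊢; omega⟩
        = (v :: t).get ⟨(i + 1) % (v :: t).length, hj⟩ := by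
      rcases Nat.lt_or_ge (i + 1) (v :: t).length with h1 | h1
      · have h3 : (i + 1) % (v :: t).length = i + 1 := Nat.mod_eq_of_lt h1
        have h4 : (⟨(i + 1) % (v :: t).length, hj⟩ : Fin (v :: t).length) = ⟨i + 1, h1⟩ :=
          Fin.ext h3
        rw [h4]
        simp only [List.get_eq_getElem]
        exact List.getElem_append_left h1
      · have hieq : i + 1 = (v :: t).length := by simp at hi h1 ⊢; omega
        have h3 : (i + 1) % (v :: t).length = 0 := by simp [hieq]
        have h4 : (⟨(i + 1) % (v :: t).length, hj⟩ : Fin (v :: t).length) = ⟨0, by simp⟩ :=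
          Fin.ext h3
        rw [h4]
        simp only [List.get_eq_getElem]
        rw [List.getElem_concat_length hieq]
        simp
    rw [← e1, ← e2]
    exact this

end helpers

/-- If C is a shortest directed cycle containing x in a digraph with independence
number at most α, then |C| ≤ 2α+1 or there is an induced cycle C' of length at most
2α with vertices inside V(C) \ {x}. -/
theorem stmt6 (A : V → V → Prop) (α : ℕ) (hα : 1 ≤ α) (hind : IndepNumLE A α)
    (x : V) (C : List V) (hC : IsDicycle A C) (hxC : x ∈ C)
    (hmin : ∀ l : List V, IsDicycle A l → x ∈ l → C.length ≤ l.length) :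
    C.length ≤ 2 * α + 1 ∨
      ∃ C' : List V, IsInducedDicycle A C' ∧ C'.length ≤ 2 * α ∧
        ∀ v ∈ C', v ∈ C ∧ v ≠ x := by
  classical
  by_cases hle : C.length ≤ 2 * α + 1
  · exact Or.inl hle
  right
  push_neg at hle
  set n := C.length with hn
  have hn4 : 2 * α + 2 ≤ n := hle
  have hnpos : 0 < n := by omega
  obtain ⟨⟨k, hk⟩, hkx⟩ := List.mem_iff_get.mp hxC
  set v : ℕ → V := fun t => C.getD ((k + t) % n) x with hvdef
  have hvget : ∀ t, v t = C.get ⟨(k + t) % n, Nat.mod_lt _ hnpos⟩ := by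
    intro t
    exact List.getD_eq_getElem (l := C) (d := x) (hn := Nat.mod_lt _ hnpos)
  have hmemC : ∀ t, v t ∈ C := by
    intro t
    rw [hvget]
    exact List.get_mem _ _
  have h0 : v 0 = x := by
    rw [hvget]
    have : (k + 0) % n = k := by rw [Nat.add_zero]; exact Nat.mod_eq_of_lt hk
    rw [show (⟨(k + 0) % n, Nat.mod_lt _ hnpos⟩ : Fin n) = ⟨k, hk⟩ from Fin.ext this]
    exact hkx
  have hper : ∀ t, v (t + n) = v t := by
    intro t
    rw [hvget, hvget]
    congr 1
    exact Fin.ext (by rw [← Nat.add_assoc]; exact Nat.add_mod_right _ _)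
  have hvn : v n = x := by
    rw [show n = 0 + n from (Nat.zero_add n).symm, hper 0, h0]
  have hinj : ∀ s t, v s = v t → s % n = t % n := by
    intro s t hst
    rw [hvget, hvget] at hst
    have := ((dicycle_nodup C hC).get_inj_iff).mp hst
    have h2 : (k + s) % n = (k + t) % n := congrArg Fin.val this
    exact Nat.ModEq.add_left_cancel' k h2
  have hinj' : ∀ s t, s < n → t < n → v s = v t → s = t := by
    intro s t hs ht hst
    have := hinj s t hst
    rwa [Nat.mod_eq_of_lt hs, Nat.mod_eq_of_lt ht] at this
  have harc : ∀ t, A (v t) (v (t + 1)) := by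
    intro t
    have := dicycle_arcs C hC ((k + t) % n) (Nat.mod_lt _ hnpos)
      (Nat.mod_lt _ hnpos)
    rw [hvget, hvget]
    have hmod : ((k + t) % n + 1) % n = (k + (t + 1)) % n := by
      have := (Nat.mod_modEq (k + t) n).add_right 1
      rw [show k + (t + 1) = k + t + 1 by omega]
      exact this
    rw [show (⟨(k + (t + 1)) % n, Nat.mod_lt _ hnpos⟩ : Fin n)
        = ⟨((k + t) % n + 1) % n, Nat.mod_lt _ hnpos⟩ from Fin.ext hmod.symm]
    exact this
  -- shortcut lemma
  have hshort : ∀ a b, a < b → b ≤ n → A (v a) (v b) → b = a + 1 := by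
    intro a b hab hbn harcab
    by_contra hne
    have hb2 : a + 2 ≤ b := by omega
    set m := n - b + a + 1 with hm
    have hm1 : 1 ≤ m := by omega
    have hmn : m ≤ n := by omega
    have hclose : A (v (b + m - 1)) (v b) := by
      rw [show b + m - 1 = a + n by omega, hper a]
      exact harcab
    have hcyc := isDicycle_seg v b m hm1 harc hclose (nodup_seg v n b m hmn hinj)
    have hxmem : x ∈ (List.range' b m).map v := by
      rw [List.mem_map]
      refine ⟨n, ?_, hvn⟩
      rw [List.mem_range']
      exact ⟨n - b, by omega, by omega⟩
    have := hmin _ hcyc hxmem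
    rw [List.length_map, List.length_range'] at this
    omega
  -- Case 1: a loop avoiding x
  by_cases hloop : ∃ t, 1 ≤ t ∧ t < n ∧ A (v t) (v t)
  · obtain ⟨t, ht1, htn, hA⟩ := hloop
    refine ⟨[v t], ⟨⟨by simp, ?_⟩, ?_⟩, by simp; omega, ?_⟩
    · exact List.Chain.cons hA List.Chain.nil
    · intro u hu w hw hAuw
      simp only [List.mem_singleton] at hu hw
      subst hu; subst hw
      show _ ∈ List.zip [v t] ([] ++ [v t])
      simp
    · intro u hu
      simp only [List.mem_singleton] at hu
      subst hu
      refine ⟨hmemC t, ?_⟩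
      intro hx
      rw [← h0] at hx
      have := hinj' t 0 htn hnpos hx
      omega
  push_neg at hloop
  -- Case 2: a digon avoiding x
  by_cases hdig : ∃ t, 1 ≤ t ∧ t + 1 < n ∧ A (v (t + 1)) (v t)
  · obtain ⟨t, ht1, htn, hA⟩ := hdig
    have hne : v t ≠ v (t + 1) := by
      intro h
      have := hinj' t (t + 1) (by omega) htn h
      omega
    refine ⟨[v t, v (t + 1)], ⟨⟨by simp [hne], ?_⟩, ?_⟩, by simp; omega, ?_⟩
    · exact List.Chain.cons (harc t) (List.Chain.cons hA List.Chain.nil)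
    · intro u hu w hw hAuw
      show _ ∈ List.zip [v t, v (t + 1)] ([v (t + 1)] ++ [v t])
      simp only [List.mem_cons, List.mem_singleton, List.not_mem_nil, or_false] at hu hw
      rcases hu with rfl | rfl <;> rcases hw with rfl | rfl
      · exact absurd hAuw (hloop t ht1 (by omega))
      · simp
      · simp
      · exact absurd hAuw (hloop (t + 1) (by omega) htn)
    · intro u hu
      simp only [List.mem_cons, List.mem_singleton, List.not_mem_nil, or_false] at hu
      have key : ∀ s, 1 ≤ s → s < n → (v s ∈ C ∧ v s ≠ x) := by
        intro s hs1 hsn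
        refine ⟨hmemC s, ?_⟩
        intro hx
        rw [← h0] at hx
        have := hinj' s 0 hsn hnpos hx
        omega
      rcases hu with rfl | rfl
      · exact key t ht1 (by omega)
      · exact key (t + 1) (by omega) htn
  push_neg at hdig
  -- Case 3: find a short backward chord via independence
  set S : Finset ℕ := insert 0 ((Finset.range α).image fun i => 2 * i + 2) with hS
  have hSmem : ∀ a ∈ S, a = 0 ∨ (2 ≤ a ∧ a ≤ 2 * α ∧ a % 2 = 0) := by
    intro a ha
    rw [hS, Finset.mem_insert] at ha
    rcases ha with rfl | ha
    · exact Or.inl rfl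
    · right
      simp only [Finset.mem_image, Finset.mem_range] at ha
      obtain ⟨i, hi, rfl⟩ := ha
      omega
  have hgap : ∀ a ∈ S, ∀ b ∈ S, a < b → a + 2 ≤ b := by
    intro a ha b hb hab
    rcases hSmem a ha with rfl | ha' <;> rcases hSmem b hb with rfl | hb' <;> omega
  have hSlt : ∀ a ∈ S, a < n := by
    intro a ha
    rcases hSmem a ha with rfl | ha' <;> omega
  have hScard : S.card = α + 1 := by
    rw [hS, Finset.card_insert_of_notMem (by simp), Finset.card_image_of_injective _
      (fun i j h => by omega), Finset.card_range]
  have hIcard : (S.image v).card = α + 1 := by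
    rw [Finset.card_image_of_injOn, hScard]
    intro a ha b hb hab
    exact hinj' a b (hSlt a ha) (hSlt b hb) hab
  have hnotindep : ¬ (∀ u ∈ S.image v, ∀ w ∈ S.image v, u ≠ w → ¬ A u w) := by
    intro h
    have := hind _ h
    omega
  push_neg at hnotindep
  obtain ⟨u, hu, w, hw, huw, hAuw⟩ := hnotindep
  rw [Finset.mem_image] at hu hw
  obtain ⟨a, haS, rfl⟩ := hu
  obtain ⟨b, hbS, rfl⟩ := hw
  have hab : a ≠ b := fun h => huw (by rw [h])
  have hexists : ∃ s, (2 ≤ s ∧ s ≤ 2 * α - 2) ∧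
      ∃ p q, 1 ≤ q ∧ p = q + s ∧ p < n ∧ A (v p) (v q) := by
    rcases lt_trichotomy a b with h | h | h
    · exfalso
      have := hshort a b h (le_of_lt (lt_of_lt_of_le (hSlt b hbS) (le_refl n))) hAuw
      have := hgap a haS b hbS h
      omega
    · exact absurd h hab
    · -- b < a
      rcases hSmem b hbS with rfl | hb'
      · -- arc v a → x
        exfalso
        have hAvn : A (v a) (v n) := by rw [hvn, ← h0]; exact hAuw
        have := hshort a n (hSlt a haS) (le_refl n) hAvn
        rcases hSmem a haS with rfl | ha' <;> omega
      · have hspan := hgap b hbS a haS h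
        rcases hSmem a haS with rfl | ha'
        · omega
        · exact ⟨a - b, ⟨by omega, by omega⟩, a, b, by omega, by omega,
            by have := hSlt a haS; omega, hAuw⟩
  set s₀ := Nat.find hexists with hs₀
  obtain ⟨⟨hs2, hsle⟩, p, q, hq1, hpq, hpn, harcpq⟩ := Nat.find_spec hexists
  set D : List V := (List.range' q (s₀ + 1)).map v with hD
  have hlenD : D.length = s₀ + 1 := by rw [hD, List.length_map, List.length_range']
  have hDpos : 0 < D.length := by omega
  have Dget : ∀ i (hi : i < D.length), D.get ⟨i, hi⟩ = v (q + i) := by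
    intro i hi
    exact get_map_range' v q (s₀ + 1) i hi
  have hDmem : ∀ u, u ∈ D → ∃ t, q ≤ t ∧ t ≤ p ∧ u = v t := by
    intro u hu
    rw [hD, List.mem_map] at hu
    obtain ⟨t, ht, rfl⟩ := hu
    rw [List.mem_range'] at ht
    obtain ⟨i, hi, rfl⟩ := ht
    exact ⟨q + 1 * i, by omega, by omega, by rw [Nat.one_mul]⟩
  have hcycD : IsDicycle A D := by
    refine isDicycle_seg v q (s₀ + 1) (by omega) harc ?_ (nodup_seg v n q (s₀ + 1) (by omega) hinj)
    rw [show q + (s₀ + 1) - 1 = p by omega]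
    exact harcpq
  -- pair membership helper
  have hpair : ∀ i, i < s₀ + 1 → ∀ i', i' = (i + 1) % (s₀ + 1) →
      (v (q + i), v (q + i')) ∈ cycleArcs D := by
    intro i hi i' hi'
    have hiD : i < D.length := by omega
    have hjD : (i + 1) % D.length < D.length := Nat.mod_lt _ hDpos
    have hm := cycleArcs_mem D i hiD hjD
    rw [Dget i hiD] at hm
    have hmodeq : (i + 1) % D.length = i' := by rw [hlenD]; omega
    rw [show (⟨(i + 1) % D.length, hjD⟩ : Fin D.length)
        = ⟨i', by omega⟩ from Fin.ext hmodeq] at hm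
    rwa [Dget i' (by omega)] at hm
  refine ⟨D, ⟨hcycD, ?_⟩, by omega, ?_⟩
  · -- induced
    intro u hu w hw hAuw
    obtain ⟨t₁, ht₁q, ht₁p, rfl⟩ := hDmem u hu
    obtain ⟨t₂, ht₂q, ht₂p, rfl⟩ := hDmem w hw
    rcases lt_trichotomy t₁ t₂ with h | h | h
    · have := hshort t₁ t₂ h (by omega) hAuw
      have h1 : t₁ - q < s₀ + 1 := by omega
      have := hpair (t₁ - q) h1 (t₁ - q + 1) (by
        rw [Nat.mod_eq_of_lt]; omega)
      rw [show q + (t₁ - q) = t₁ by omega, show q + (t₁ - q + 1) = t₂ by omega] at this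
      exact this
    · exfalso
      subst h
      exact hloop t₁ (by omega) (by omega) hAuw
    · -- backward
      rcases Nat.lt_or_ge (t₁ - t₂) 2 with hd | hd
      · -- digon
        exfalso
        have ht : t₁ = t₂ + 1 := by omega
        refine hdig t₂ (by omega) (by omega) ?_
        rw [← ht]
        exact hAuw
      · have hPd : (2 ≤ t₁ - t₂ ∧ t₁ - t₂ ≤ 2 * α - 2) ∧
            ∃ p' q', 1 ≤ q' ∧ p' = q' + (t₁ - t₂) ∧ p' < n ∧ A (v p') (v q') :=
          ⟨⟨hd, by omega⟩, t₁, t₂, by omega, by omega, by omega, hAuw⟩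
        have hmin' : s₀ ≤ t₁ - t₂ := Nat.find_min' hexists hPd
        have ht₂ : t₂ = q := by omega
        have ht₁ : t₁ = p := by omega
        have hmm := hpair s₀ (by omega) 0 (by simp)
        rw [show q + s₀ = p by omega, Nat.add_zero] at hmm
        rw [ht₁, ht₂]
        exact hmm
  · intro u hu
    obtain ⟨t, htq, htp, rfl⟩ := hDmem u hu
    refine ⟨hmemC t, ?_⟩
    intro hx
    rw [← h0] at hx
    have := hinj' t 0 (by omega) hnpos hx
    omega
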